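/- arXiv:2005.02224 — 3 statements merged into one kernel-verified Lean document; each statement's English description precedes it below -/
import Mathlib

section
/- Let V ∈ ℂ^{n,n} be H-unitary and X ∈ ℂ^{n,n} with VX = XV. Then there exists an H-unitary matrix U ∈ ℂ^{n,n} such that V = U² and UX = XU. -/
open Matrix

section Helpers
open Polynomial

noncomputable def csqrtB (z : ℂ) : ℂ := z ^ (2⁻¹ : ℂ)

lemma csqrtB_mul_self {z : ℂ} (hz : z ≠ 0) : csqrtB z * csqrtB z = z := by
  rw [csqrtB, ← Complex.cpow_add _ _ hz]; norm_num

lemma csqrtB_ne_zero {z : ℂ} (hz : z ≠ 0) : csqrtB z ≠ 0 := by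
  intro h; apply hz; rw [← csqrtB_mul_self hz, h, mul_zero]

lemma csqrtB_symm {z : ℂ} (hz : z ≠ 0) :
    csqrtB ((starRingEnd ℂ z)⁻¹) = (starRingEnd ℂ (csqrtB z))⁻¹ := by
  by_cases hπ : z.arg = Real.pi
  · have hre : z.re < 0 ∧ z.im = 0 := Complex.arg_eq_pi_iff.mp hπ
    have hconj : starRingEnd ℂ z = z := Complex.conj_eq_iff_im.mpr hre.2
    have hinv_ne : z⁻¹ ≠ 0 := inv_ne_zero hz
    rw [hconj]
    rw [csqrtB, csqrtB, Complex.cpow_def_of_ne_zero hinv_ne, Complex.cpow_def_of_ne_zero hz]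
    rw [Complex.log_inv_eq_ite, if_pos hπ, ← Complex.exp_conj, ← Complex.exp_neg]
    congr 1
    rw [_root_.map_mul]
    simp [neg_mul]
    exact Or.inl (Complex.conj_ofNat 2).symm
  · have hπ' : (starRingEnd ℂ z).arg ≠ Real.pi := by
      rw [Complex.arg_conj, if_neg hπ]
      intro h
      have := Complex.arg_le_pi z
      have := Complex.neg_pi_lt_arg z
      linarith [neg_eq_iff_eq_neg.mp h]
    unfold csqrtB
    rw [Complex.inv_cpow _ _ hπ', Complex.conj_cpow _ _ hπ]
    norm_num [map_inv₀, Complex.conj_ofNat]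

lemma exists_sqrt_mod (a s : ℂ) (hs : s * s = a) (hs0 : s ≠ 0) (m : ℕ) :
    ∃ u : Polynomial ℂ, u.eval a = s ∧ (X - C a) ^ (m + 1) ∣ u * u - X := by
  induction m with
  | zero =>
    exact ⟨C s, by simp, -1, by rw [← C_mul, hs]; ring⟩
  | succ m ih =>
    obtain ⟨u, hu, g, hg⟩ := ih
    set c : ℂ := g.eval a / (2 * s) with hc
    have key : (X - C a) ∣ g - 2 * C c * u + C c * C c * (X - C a) ^ (m + 1) := by
      rw [dvd_iff_isRoot]
      simp only [IsRoot, eval_add, eval_sub, eval_mul, eval_pow, eval_ofNat, eval_C, eval_X, hu,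
        sub_self, zero_pow (Nat.succ_ne_zero m), mul_zero]
      rw [hc]
      field_simp
      ring
    obtain ⟨w, hw⟩ := key
    refine ⟨u - C c * (X - C a) ^ (m + 1), ?_, w, ?_⟩
    · simp [hu, sub_self, zero_pow (Nat.succ_ne_zero m)]
    · linear_combination hg + (X - C a) ^ (m + 1) * hw

lemma exists_interpolation (χ : Polynomial ℂ) (hmo : χ.Monic) (s : ℂ → ℂ)
    (hroot : ∀ l ∈ χ.roots.toFinset, s l * s l = l ∧ s l ≠ 0) :
    ∃ p : Polynomial ℂ, χ ∣ p * p - X ∧ ∀ l ∈ χ.roots.toFinset, p.eval l = s l := by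
  classical
  set S := χ.roots.toFinset with hS
  have hχ0 : χ ≠ 0 := hmo.ne_zero
  have hmpos : ∀ l ∈ S, 0 < χ.rootMultiplicity l := by
    intro l hl
    rw [hS, Multiset.mem_toFinset, mem_roots hχ0] at hl
    exact (rootMultiplicity_pos hχ0).mpr hl
  have h1 : ∀ l : ℂ, ∃ u : Polynomial ℂ,
      l ∈ S → u.eval l = s l ∧ (X - C l) ^ (χ.rootMultiplicity l) ∣ u * u - X := by
    intro l
    by_cases hl : l ∈ S
    · obtain ⟨u, h1, h2⟩ := exists_sqrt_mod l (s l) (hroot l hl).1 (hroot l hl).2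
        (χ.rootMultiplicity l - 1)
      rw [Nat.sub_add_cancel (hmpos l hl)] at h2
      exact ⟨u, fun _ => ⟨h1, h2⟩⟩
    · exact ⟨0, fun h' => absurd h' hl⟩
  choose u hu using h1
  have hcop : ∀ l ∈ S, ∀ μ ∈ S, l ≠ μ →
      IsCoprime ((X - C l) ^ (χ.rootMultiplicity l)) ((X - C μ) ^ (χ.rootMultiplicity μ)) := by
    intro l _ μ _ hlμ
    exact (isCoprime_X_sub_C_of_isUnit_sub (sub_ne_zero.2 hlμ).isUnit).pow
  have h2 : ∀ l : ℂ, ∃ e : Polynomial ℂ, l ∈ S →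
      (X - C l) ^ (χ.rootMultiplicity l) ∣ e - 1 ∧
      ∀ μ ∈ S, μ ≠ l → (X - C μ) ^ (χ.rootMultiplicity μ) ∣ e := by
    intro l
    by_cases hl : l ∈ S
    · have hco : IsCoprime ((X - C l) ^ (χ.rootMultiplicity l))
          (∏ μ ∈ S.erase l, (X - C μ) ^ (χ.rootMultiplicity μ)) := by
        refine IsCoprime.prod_right fun μ hμ => ?_
        exact hcop l hl μ (Finset.mem_of_mem_erase hμ)
          (Ne.symm (Finset.ne_of_mem_erase hμ))
      obtain ⟨a, b, hab⟩ := hco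
      refine ⟨b * ∏ μ ∈ S.erase l, (X - C μ) ^ (χ.rootMultiplicity μ), fun _ => ⟨⟨-a, ?_⟩, ?_⟩⟩
      · linear_combination hab
      · intro μ hμ hne
        exact Dvd.dvd.mul_left
          (Finset.dvd_prod_of_mem _ (Finset.mem_erase.mpr ⟨hne, hμ⟩)) b
    · exact ⟨0, fun h' => absurd h' hl⟩
  choose e he using h2
  set p : Polynomial ℂ := ∑ l ∈ S, u l * e l with hp
  have hdiff : ∀ l ∈ S, (X - C l) ^ (χ.rootMultiplicity l) ∣ p - u l := by
    intro l hl
    have hsum : p = u l * e l + ∑ μ ∈ S.erase l, u μ * e μ := by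
      rw [hp]
      exact (Finset.add_sum_erase _ _ hl).symm
    rw [hsum]
    have : u l * e l + (∑ μ ∈ S.erase l, u μ * e μ) - u l
        = u l * (e l - 1) + ∑ μ ∈ S.erase l, u μ * e μ := by ring
    rw [this]
    refine dvd_add (Dvd.dvd.mul_left ((he l hl).1) _) (Finset.dvd_sum fun μ hμ => ?_)
    exact Dvd.dvd.mul_left
      ((he μ (Finset.mem_of_mem_erase hμ)).2 l hl (Ne.symm (Finset.ne_of_mem_erase hμ))) _
  have heval : ∀ l ∈ S, p.eval l = s l := by
    intro l hl
    obtain ⟨t, ht⟩ := hdiff l hl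
    have : p.eval l - (u l).eval l = 0 := by
      have := congrArg (eval l) ht
      simpa [sub_self, zero_pow (Nat.pos_iff_ne_zero.mp (hmpos l hl))] using this
    rw [sub_eq_zero] at this
    rw [this]
    exact (hu l hl).1
  refine ⟨p, ?_, heval⟩
  have hfact : χ = ∏ l ∈ S, (X - C l) ^ (χ.rootMultiplicity l) :=
    (Splits.eq_prod_roots_of_monic (IsAlgClosed.splits χ) hmo).trans
      prod_multiset_root_eq_finset_root
  rw [hfact]
  refine Finset.prod_dvd_of_coprime ?_ ?_
  · intro x hx y hy hxy
    exact hcop x hx y hy hxy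
  · intro l hl
    have h2 := (hu l hl).2
    have hre : p * p - X = (p - u l) * (p + u l) + (u l * u l - X) := by ring
    rw [hre]
    exact dvd_add ((hdiff l hl).mul_right _) h2

variable {n : ℕ}

lemma aeval_conjT (A : Matrix (Fin n) (Fin n) ℂ) (f : Polynomial ℂ) :
    (Polynomial.aeval A f)ᴴ = Polynomial.aeval Aᴴ (f.map (starRingEnd ℂ)) := by
  induction f using Polynomial.induction_on' with
  | add p q hp hq => simp [hp, hq]
  | monomial k a =>
    simp only [aeval_monomial, Polynomial.map_monomial]
    rw [Matrix.conjTranspose_mul, Matrix.conjTranspose_pow]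
    rw [Algebra.algebraMap_eq_smul_one, Algebra.algebraMap_eq_smul_one]
    rw [Matrix.conjTranspose_smul, Matrix.conjTranspose_one]
    rw [Matrix.mul_smul, Matrix.smul_mul, mul_one, one_mul, starRingEnd_apply]

lemma conjPowH (H A : Matrix (Fin n) (Fin n) ℂ) (hH : IsUnit H.det) (k : ℕ) :
    (H⁻¹ * A * H) ^ k = H⁻¹ * A ^ k * H := by
  induction k with
  | zero => simp [Matrix.nonsing_inv_mul H hH]
  | succ k ih =>
    rw [pow_succ, ih, pow_succ]
    calc H⁻¹ * A ^ k * H * (H⁻¹ * A * H) = H⁻¹ * A ^ k * (H * H⁻¹) * A * H := by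
          noncomm_ring
      _ = H⁻¹ * (A ^ k * A) * H := by rw [Matrix.mul_nonsing_inv H hH]; noncomm_ring

lemma conj_aeval (H A : Matrix (Fin n) (Fin n) ℂ) (hH : IsUnit H.det) (f : Polynomial ℂ) :
    H⁻¹ * (Polynomial.aeval A f) * H = Polynomial.aeval (H⁻¹ * A * H) f := by
  induction f using Polynomial.induction_on' with
  | add p q hp hq =>
    rw [map_add, map_add, ← hp, ← hq]
    noncomm_ring
  | monomial k a =>
    rw [aeval_monomial, aeval_monomial, conjPowH H A hH k,
      Algebra.algebraMap_eq_smul_one]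
    calc H⁻¹ * (a • 1 * A ^ k) * H = a • (H⁻¹ * A ^ k * H) := by
          simp [Matrix.smul_mul, Matrix.mul_smul]
      _ = (a • 1) * (H⁻¹ * A ^ k * H) := by simp [Matrix.smul_mul]

lemma commute_aeval (A B : Matrix (Fin n) (Fin n) ℂ) (h : A * B = B * A) (f : Polynomial ℂ) :
    Polynomial.aeval A f * B = B * Polynomial.aeval A f := by
  induction f using Polynomial.induction_on' with
  | add p q hp hq =>
    rw [map_add, add_mul, mul_add, hp, hq]
  | monomial k a =>
    rw [aeval_monomial, Algebra.algebraMap_eq_smul_one]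
    have hk : A ^ k * B = B * A ^ k := by
      induction k with
      | zero => simp
      | succ k ih => rw [pow_succ, mul_assoc, h, ← mul_assoc, ih]; noncomm_ring
    simp only [Matrix.smul_mul, Matrix.mul_smul, one_mul, smul_smul]
    rw [hk]

lemma eval_charpoly' (V : Matrix (Fin n) (Fin n) ℂ) (k : ℂ) :
    V.charpoly.eval k = (k • (1 : Matrix (Fin n) (Fin n) ℂ) - V).det := by
  rw [Matrix.charpoly, ← Polynomial.coe_evalRingHom, RingHom.map_det]
  congr 1
  ext i j
  by_cases h : i = j <;>
    simp [Matrix.charmatrix_apply, h, Matrix.one_apply, Matrix.diagonal_apply]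

lemma root_iff_spectrum (V : Matrix (Fin n) (Fin n) ℂ) (k : ℂ) :
    k ∈ spectrum ℂ V ↔ V.charpoly.IsRoot k := by
  rw [spectrum.mem_iff, IsRoot, eval_charpoly', Algebra.algebraMap_eq_smul_one,
    Matrix.isUnit_iff_isUnit_det, isUnit_iff_ne_zero, not_not]

lemma eval_map_conj (p : Polynomial ℂ) (w : ℂ) :
    (p.map (starRingEnd ℂ)).eval w = starRingEnd ℂ (p.eval (starRingEnd ℂ w)) := by
  induction p using Polynomial.induction_on' with
  | add p q hp hq => simp [hp, hq]
  | monomial k a => simp [Polynomial.map_monomial]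

end Helpers

/-- An H-unitary matrix commuting with X has an H-unitary square root commuting with X. -/
theorem hUnitary_sqrt_commuting {n : ℕ}
    (H V X : Matrix (Fin n) (Fin n) ℂ) (hH : H.IsHermitian) (hdet : IsUnit H.det)
    (hV : H⁻¹ * Vᴴ * H * V = 1) (hcomm : V * X = X * V) :
    ∃ U : Matrix (Fin n) (Fin n) ℂ,
      H⁻¹ * Uᴴ * H * U = 1 ∧ V = U * U ∧ U * X = X * U := by
  classical
  rcases Nat.eq_zero_or_pos n with hn | hn
  · subst hn
    exact ⟨1, Subsingleton.elim _ _, Subsingleton.elim _ _, Subsingleton.elim _ _⟩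
  have hH1 : H * H⁻¹ = 1 := Matrix.mul_nonsing_inv H hdet
  have hH2 : H⁻¹ * H = 1 := Matrix.nonsing_inv_mul H hdet
  set W₀ : Matrix (Fin n) (Fin n) ℂ := H⁻¹ * Vᴴ * H with hW₀
  have hW₀V : W₀ * V = 1 := hV
  have hVW₀ : V * W₀ = 1 := mul_eq_one_comm.mp hV
  have hVunit : IsUnit V := ⟨⟨V, W₀, hVW₀, hW₀V⟩, rfl⟩
  have hW₀unit : IsUnit W₀ := ⟨⟨W₀, V, hW₀V, hVW₀⟩, rfl⟩
  have hVct : Vᴴ = H * W₀ * H⁻¹ := by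
    have : H * W₀ * H⁻¹ = (H * H⁻¹) * Vᴴ * (H * H⁻¹) := by rw [hW₀]; noncomm_ring
    rw [this, hH1, one_mul, mul_one]
  set χ := V.charpoly with hχ
  have hmono : χ.Monic := V.charpoly_monic
  have hdetV : V.det ≠ 0 := by
    intro h
    have := (Matrix.isUnit_iff_isUnit_det V).mp hVunit
    rw [h] at this
    exact this.ne_zero rfl
  have hdetW₀ : W₀.det ≠ 0 := by
    intro h
    have := (Matrix.isUnit_iff_isUnit_det W₀).mp hW₀unit
    rw [h] at this
    exact this.ne_zero rfl
  have hdetH : H.det ≠ 0 := by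
    intro h; rw [h] at hdet; exact hdet.ne_zero rfl
  have hdetHinv : (H⁻¹).det ≠ 0 := by
    intro h
    have h1 : H.det * (H⁻¹).det = 1 := by rw [← Matrix.det_mul, hH1, Matrix.det_one]
    rw [h, mul_zero] at h1
    exact zero_ne_one h1
  have h0 : ∀ k, χ.IsRoot k → k ≠ 0 := by
    intro k hk hk0
    subst hk0
    rw [Polynomial.IsRoot, eval_charpoly'] at hk
    rw [zero_smul, zero_sub, Matrix.det_neg] at hk
    rcases mul_eq_zero.mp hk with h | h
    · exact pow_ne_zero _ (neg_ne_zero.mpr one_ne_zero) h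
    · exact hdetV h
  have hclose : ∀ k, χ.IsRoot k → χ.IsRoot ((starRingEnd ℂ k)⁻¹) := by
    intro k hk
    have hk0 : k ≠ 0 := h0 k hk
    have hkc0 : (starRingEnd ℂ) k ≠ 0 := by
      simpa using hk0
    rw [Polynomial.IsRoot, eval_charpoly'] at hk ⊢
    have h1 : ((k • (1 : Matrix (Fin n) (Fin n) ℂ) - V)ᴴ).det = 0 := by
      rw [Matrix.det_conjTranspose, hk, star_zero]
    have h2 : (k • (1 : Matrix (Fin n) (Fin n) ℂ) - V)ᴴ
        = (starRingEnd ℂ k) • (1 : Matrix (Fin n) (Fin n) ℂ) - Vᴴ := by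
      rw [Matrix.conjTranspose_sub, Matrix.conjTranspose_smul, Matrix.conjTranspose_one]
      rfl
    have he : (starRingEnd ℂ k) • (1 : Matrix (Fin n) (Fin n) ℂ) - Vᴴ
        = H * ((starRingEnd ℂ k) • (1 : Matrix (Fin n) (Fin n) ℂ) - W₀) * H⁻¹ := by
      rw [hVct]
      rw [Matrix.mul_sub, Matrix.sub_mul]
      congr 1
      rw [Matrix.mul_smul, mul_one, Matrix.smul_mul, hH1]
    have h3 : ((starRingEnd ℂ k) • (1 : Matrix (Fin n) (Fin n) ℂ) - W₀).det = 0 := by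
      have := h1
      rw [h2, he, Matrix.det_mul, Matrix.det_mul] at this
      rcases mul_eq_zero.mp this with h' | h'
      · rcases mul_eq_zero.mp h' with h'' | h''
        · exact absurd h'' hdetH
        · exact h''
      · exact absurd h' hdetHinv
    have h4 : ((starRingEnd ℂ k) • V - 1).det = 0 := by
      have hmul : ((starRingEnd ℂ k) • V - 1) * W₀
          = (starRingEnd ℂ k) • (1 : Matrix (Fin n) (Fin n) ℂ) - W₀ := by
        rw [Matrix.sub_mul, Matrix.smul_mul, hVW₀, one_mul]
      have := congrArg Matrix.det hmul
      rw [Matrix.det_mul, h3] at this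
      rcases mul_eq_zero.mp this with h' | h'
      · exact h'
      · exact absurd h' hdetW₀
    have h5 : (V - ((starRingEnd ℂ k)⁻¹) • (1 : Matrix (Fin n) (Fin n) ℂ)).det = 0 := by
      have hsm : (starRingEnd ℂ k) • (V - ((starRingEnd ℂ k)⁻¹) • (1 : Matrix (Fin n) (Fin n) ℂ))
          = (starRingEnd ℂ k) • V - 1 := by
        rw [smul_sub, smul_smul, mul_inv_cancel₀ hkc0, one_smul]
      have := congrArg Matrix.det hsm
      rw [Matrix.det_smul, h4] at this
      rcases mul_eq_zero.mp this with h' | h'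
      · exact absurd h' (pow_ne_zero _ hkc0)
      · exact h'
    have : ((starRingEnd ℂ k)⁻¹ • (1 : Matrix (Fin n) (Fin n) ℂ) - V)
        = -(V - (starRingEnd ℂ k)⁻¹ • (1 : Matrix (Fin n) (Fin n) ℂ)) := by
      rw [neg_sub]
    rw [this, Matrix.det_neg, h5, mul_zero]
  have hrootS : ∀ l ∈ χ.roots.toFinset, csqrtB l * csqrtB l = l ∧ csqrtB l ≠ 0 := by
    intro l hl
    rw [Multiset.mem_toFinset, Polynomial.mem_roots hmono.ne_zero] at hl
    have hl0 := h0 l hl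
    exact ⟨csqrtB_mul_self hl0, csqrtB_ne_zero hl0⟩
  obtain ⟨p, hdvd, hevalp⟩ := exists_interpolation χ hmono csqrtB hrootS
  set U := Polynomial.aeval V p with hU
  have hCH : Polynomial.aeval V χ = 0 := Matrix.aeval_self_charpoly V
  have hUU : U * U = V := by
    obtain ⟨t, ht⟩ := hdvd
    have hq := congrArg (Polynomial.aeval V) ht
    rw [map_sub, _root_.map_mul, _root_.map_mul, Polynomial.aeval_X, hCH, zero_mul] at hq
    rw [← hU] at hq
    exact sub_eq_zero.mp hq
  have hUX : U * X = X * U := commute_aeval V X hcomm p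
  set c₀ := χ.coeff 0 with hc₀def
  have hc₀ : c₀ ≠ 0 := by
    intro h
    have hr : χ.IsRoot 0 := by
      rw [Polynomial.IsRoot, ← Polynomial.coeff_zero_eq_eval_zero]
      exact h
    exact h0 0 hr rfl
  set hpol := -(c₀⁻¹) • χ.divX with hhpol
  have hXdiv : Polynomial.X * χ.divX = χ - Polynomial.C c₀ := by
    have := Polynomial.X_mul_divX_add (p := χ)
    linear_combination this
  have hXh : Polynomial.X * hpol = -(c₀⁻¹) • (χ - Polynomial.C c₀) := by
    rw [hhpol, mul_smul_comm, hXdiv]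
  have haevalh : V * Polynomial.aeval V hpol = 1 := by
    have hq := congrArg (Polynomial.aeval V) hXh
    rw [_root_.map_mul, Polynomial.aeval_X] at hq
    have hval : (Polynomial.aeval V) (-c₀⁻¹ • (χ - Polynomial.C c₀)) = 1 := by
      rw [_root_.map_smul, map_sub, hCH, Polynomial.aeval_C, zero_sub,
        Algebra.algebraMap_eq_smul_one, smul_neg, neg_smul, neg_neg, smul_smul,
        inv_mul_cancel₀ hc₀, one_smul]
    rw [hq, hval]
  have hW₀h : Polynomial.aeval V hpol = W₀ := by
    calc Polynomial.aeval V hpol = (W₀ * V) * Polynomial.aeval V hpol := by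
          rw [hW₀V, one_mul]
      _ = W₀ * (V * Polynomial.aeval V hpol) := by rw [mul_assoc]
      _ = W₀ := by rw [haevalh, mul_one]
  have hevalh : ∀ k, χ.IsRoot k → hpol.eval k = k⁻¹ := by
    intro k hk
    have hk0 := h0 k hk
    have hk' : χ.eval k = 0 := hk
    have hq := congrArg (Polynomial.eval k) hXh
    simp only [Polynomial.eval_mul, Polynomial.eval_X, Polynomial.eval_smul,
      Polynomial.eval_sub, Polynomial.eval_C, hk', zero_sub, smul_eq_mul] at hq
    rw [neg_mul_neg, inv_mul_cancel₀ hc₀] at hq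
    field_simp
    linear_combination hq
  set pc := p.map (starRingEnd ℂ) with hpc
  set Q := pc.comp hpol with hQ
  set P := Q * p with hP
  have hWQ : H⁻¹ * Uᴴ * H = Polynomial.aeval V Q := by
    rw [hQ, Polynomial.aeval_comp, hW₀h]
    rw [hU, aeval_conjT, ← hpc]
    rw [conj_aeval H Vᴴ hdet pc, ← hW₀]
  set E := H⁻¹ * Uᴴ * H * U with hE
  have hEP : E = Polynomial.aeval V P := by
    rw [hE, hWQ, hU, hP, _root_.map_mul]
  have hcomWU : H⁻¹ * Uᴴ * H * U = U * (H⁻¹ * Uᴴ * H) := by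
    rw [hWQ]
    conv_lhs => rw [hU]
    conv_rhs => rw [hU]
    rw [← _root_.map_mul, ← _root_.map_mul, mul_comm]
  have hWW : (H⁻¹ * Uᴴ * H) * (H⁻¹ * Uᴴ * H) = W₀ := by
    calc (H⁻¹ * Uᴴ * H) * (H⁻¹ * Uᴴ * H) = H⁻¹ * Uᴴ * (H * H⁻¹) * Uᴴ * H := by
          noncomm_ring
      _ = H⁻¹ * (U * U)ᴴ * H := by rw [hH1, Matrix.conjTranspose_mul]; noncomm_ring
      _ = W₀ := by rw [hUU, hW₀]
  have hEE : E * E = 1 := by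
    rw [hE]
    calc (H⁻¹ * Uᴴ * H * U) * (H⁻¹ * Uᴴ * H * U)
        = (H⁻¹ * Uᴴ * H) * (U * (H⁻¹ * Uᴴ * H) * U) := by noncomm_ring
      _ = (H⁻¹ * Uᴴ * H) * (H⁻¹ * Uᴴ * H * U * U) := by rw [← hcomWU]
      _ = ((H⁻¹ * Uᴴ * H) * (H⁻¹ * Uᴴ * H)) * (U * U) := by noncomm_ring
      _ = 1 := by rw [hWW, hUU, hW₀V]
  have hPval : ∀ k ∈ spectrum ℂ V, Polynomial.eval k P = 1 := by
    intro k hk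
    rw [root_iff_spectrum, ← hχ] at hk
    have hk0 := h0 k hk
    have hσ : χ.IsRoot ((starRingEnd ℂ k)⁻¹) := hclose k hk
    have hmemk : k ∈ χ.roots.toFinset := by
      rw [Multiset.mem_toFinset, Polynomial.mem_roots hmono.ne_zero]; exact hk
    have hmemσ : (starRingEnd ℂ k)⁻¹ ∈ χ.roots.toFinset := by
      rw [Multiset.mem_toFinset, Polynomial.mem_roots hmono.ne_zero]; exact hσ
    rw [hP, Polynomial.eval_mul, hQ, Polynomial.eval_comp, hevalh k hk, hpc,
      eval_map_conj p (k⁻¹), map_inv₀, hevalp _ hmemσ, hevalp _ hmemk,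
      csqrtB_symm hk0, map_inv₀]
    rw [Complex.conj_conj]
    exact inv_mul_cancel₀ (csqrtB_ne_zero hk0)
  have hnon : (spectrum ℂ V).Nonempty := by
    have hdeg' : χ.degree = n := by
      rw [hχ, Matrix.charpoly_degree_eq_dim, Fintype.card_fin]
    have hdeg : 0 < χ.degree := by
      rw [hdeg']
      exact_mod_cast hn
    obtain ⟨k, hk⟩ := Complex.exists_root hdeg
    exact ⟨k, (root_iff_spectrum V k).mpr (hχ ▸ hk)⟩
  have hunit : IsUnit (1 + E) := by
    by_contra hnu
    have hmem : (-1 : ℂ) ∈ spectrum ℂ E := by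
      rw [spectrum.mem_iff]
      intro hu
      apply hnu
      have halg : algebraMap ℂ (Matrix (Fin n) (Fin n) ℂ) (-1) - E = -(1 + E) := by
        rw [Algebra.algebraMap_eq_smul_one, neg_smul, one_smul]
        abel
      rw [halg] at hu
      have hu2 := hu.neg
      rwa [neg_neg] at hu2
    rw [hEP, spectrum.map_polynomial_aeval_of_nonempty V P hnon] at hmem
    obtain ⟨k, hk, hk1⟩ := hmem
    simp only [hPval k hk] at hk1
    norm_num at hk1
  have hE1 : E = 1 := by
    have hz : (E - 1) * (1 + E) = 0 := by
      have hr : (E - 1) * (1 + E) = E * E - 1 := by noncomm_ring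
      rw [hr, hEE, sub_self]
    obtain ⟨v, hv⟩ := hunit
    have hfin : (E - 1) = (E - 1) * ((1 + E) * (↑v⁻¹ : Matrix (Fin n) (Fin n) ℂ)) := by
      rw [← hv, Units.mul_inv, mul_one]
    rw [← mul_assoc, hz, zero_mul] at hfin
    exact sub_eq_zero.mp hfin
  exact ⟨U, hE ▸ hE1, hUU.symm, hUX⟩
end

section
/- If X ∈ ℂ^{n,n} admits an H-polar decomposition X = UA with commuting factors, then there exists an H-unitary matrix V with X = V X^{[*]}; in particular X is H-normal (X X^{[*]} = X^{[*]} X) and ker X = ker X^{[*]}. -/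
open Matrix

/-- If X has an H-polar decomposition with commuting factors, then X = V X^{[*]} for some
H-unitary V; in particular X is H-normal and ker X = ker X^{[*]}. -/
theorem hPolar_comm_implies_normal {n : ℕ}
    (H X U A : Matrix (Fin n) (Fin n) ℂ) (hH : H.IsHermitian) (hdet : IsUnit H.det)
    (hU : H⁻¹ * Uᴴ * H * U = 1) (hA : H⁻¹ * Aᴴ * H = A) (hX : X = U * A)
    (hcomm : U * A = A * U) :
    (∃ V : Matrix (Fin n) (Fin n) ℂ,
        H⁻¹ * Vᴴ * H * V = 1 ∧ X = V * (H⁻¹ * Xᴴ * H)) ∧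
      X * (H⁻¹ * Xᴴ * H) = (H⁻¹ * Xᴴ * H) * X ∧
      (∀ v : Fin n → ℂ, X *ᵥ v = 0 ↔ (H⁻¹ * Xᴴ * H) *ᵥ v = 0) := by
  have hHr : H * H⁻¹ = 1 := Matrix.mul_nonsing_inv H hdet
  have hUinv : U⁻¹ = H⁻¹ * Uᴴ * H := Matrix.inv_eq_left_inv hU
  have hUl : U⁻¹ * U = 1 := by rw [hUinv]; exact hU
  have hUr : U * U⁻¹ = 1 := mul_eq_one_comm.mp hUl
  -- the H-adjoint of X
  have hXadj : H⁻¹ * Xᴴ * H = A * U⁻¹ := by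
    rw [hX, conjTranspose_mul, hUinv]
    calc H⁻¹ * (Aᴴ * Uᴴ) * H
        = H⁻¹ * Aᴴ * (H * H⁻¹) * Uᴴ * H := by
          rw [hHr, mul_one, mul_assoc H⁻¹ Aᴴ Uᴴ]
      _ = (H⁻¹ * Aᴴ * H) * (H⁻¹ * Uᴴ * H) := by
          simp only [Matrix.mul_assoc]
      _ = A * (H⁻¹ * Uᴴ * H) := by rw [hA]
  -- A commutes with U⁻¹
  have hcomm' : A * U⁻¹ = U⁻¹ * A := by
    calc A * U⁻¹ = U⁻¹ * U * A * U⁻¹ := by rw [hUl, one_mul]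
      _ = U⁻¹ * (U * A) * U⁻¹ := by rw [mul_assoc U⁻¹ U A]
      _ = U⁻¹ * (A * U) * U⁻¹ := by rw [hcomm]
      _ = U⁻¹ * A * (U * U⁻¹) := by simp only [Matrix.mul_assoc]
      _ = U⁻¹ * A := by rw [hUr, mul_one]
  refine ⟨⟨U * U, ?_, ?_⟩, ?_, ?_⟩
  · -- U*U is H-unitary
    rw [conjTranspose_mul]
    calc H⁻¹ * (Uᴴ * Uᴴ) * H * (U * U)
        = H⁻¹ * Uᴴ * (H * H⁻¹) * Uᴴ * H * (U * U) := by
          rw [hHr, mul_one, mul_assoc H⁻¹ Uᴴ Uᴴ]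
      _ = (H⁻¹ * Uᴴ * H) * ((H⁻¹ * Uᴴ * H) * U) * U := by
          simp only [Matrix.mul_assoc]
      _ = 1 := by rw [hU, mul_one]; exact hU
  · -- X = (U*U) * X^{[*]}
    rw [hXadj, hX]
    calc U * A = U * A * (U * U⁻¹) := by rw [hUr, mul_one]
      _ = U * (A * U) * U⁻¹ := by simp only [Matrix.mul_assoc]
      _ = U * (U * A) * U⁻¹ := by rw [hcomm]
      _ = U * U * (A * U⁻¹) := by simp only [Matrix.mul_assoc]
  · -- H-normality: both sides equal A * A
    have h2 : (A * U⁻¹) * (U * A) = A * A := by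
      calc (A * U⁻¹) * (U * A) = A * (U⁻¹ * U) * A := by simp only [Matrix.mul_assoc]
        _ = A * A := by rw [hUl, mul_one]
    have h1 : (U * A) * (A * U⁻¹) = A * A := by
      calc (U * A) * (A * U⁻¹) = (A * U) * (A * U⁻¹) := by rw [hcomm]
        _ = A * (U * A) * U⁻¹ := by simp only [Matrix.mul_assoc]
        _ = A * (A * U) * U⁻¹ := by rw [hcomm]
        _ = A * A * (U * U⁻¹) := by simp only [Matrix.mul_assoc]
        _ = A * A := by rw [hUr, mul_one]
    rw [hXadj, hX, h1, h2]
  · -- kernels agree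
    intro v
    rw [hXadj, hX]
    constructor
    · intro h
      have hAv : A *ᵥ v = 0 := by
        have : U⁻¹ *ᵥ ((U * A) *ᵥ v) = 0 := by rw [h, Matrix.mulVec_zero]
        rwa [Matrix.mulVec_mulVec, ← Matrix.mul_assoc, hUl, Matrix.one_mul] at this
      rw [hcomm', ← Matrix.mulVec_mulVec, hAv, Matrix.mulVec_zero]
    · intro h
      have hAv : A *ᵥ v = 0 := by
        have : U *ᵥ ((A * U⁻¹) *ᵥ v) = 0 := by rw [h, Matrix.mulVec_zero]
        rwa [hcomm', Matrix.mulVec_mulVec, ← Matrix.mul_assoc, hUr, Matrix.one_mul] at this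
      rw [← Matrix.mulVec_mulVec, hAv, Matrix.mulVec_zero]
end

section
/- Let A ∈ ℝ^{n,n} be H-selfadjoint. Then there exists a nonsingular T ∈ ℝ^{n,n} such that T^{-1}AT = diag(A_1, A_0) and T^T H T = diag(H_1, H_0) (block diagonal with matching block sizes), where A_1 is nonsingular and A_0 is nilpotent. -/
open Matrix

section Aux

variable {R M M' : Type*} [CommRing R] [AddCommGroup M] [Module R M]
  [AddCommGroup M'] [Module R M'] {ι ι' : Type*} [Fintype ι] [DecidableEq ι]

lemma aux_toMatrix_map (b : Module.Basis ι R M) (φ : M ≃ₗ[R] M') (f : Module.End R M') :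
    LinearMap.toMatrix (b.map φ) (b.map φ) f =
      LinearMap.toMatrix b b (φ.symm.toLinearMap ∘ₗ f ∘ₗ φ.toLinearMap) := by
  ext i j
  simp [LinearMap.toMatrix_apply, Module.Basis.map_apply, Module.Basis.map_repr]

lemma aux_toMatrix_reindex [Fintype ι'] [DecidableEq ι']
    (b : Module.Basis ι R M) (ε : ι ≃ ι') (f : Module.End R M) :
    LinearMap.toMatrix (b.reindex ε) (b.reindex ε) f =
      (LinearMap.toMatrix b b f).submatrix ε.symm ε.symm := by
  ext i j
  simp [LinearMap.toMatrix_apply, Module.Basis.reindex_apply, Module.Basis.repr_reindex_apply,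
    Matrix.submatrix_apply]

end Aux

/-- An H-selfadjoint real matrix can be simultaneously block-diagonalised with H,
with a nonsingular block and a nilpotent block. -/
theorem hSelfadjoint_block_decomposition {n : ℕ}
    (H A : Matrix (Fin n) (Fin n) ℝ) (hH : Hᵀ = H) (hdet : IsUnit H.det)
    (hA : H⁻¹ * Aᵀ * H = A) :
    ∃ (k l : ℕ) (e : Fin n ≃ (Fin k ⊕ Fin l)) (T : Matrix (Fin n) (Fin n) ℝ)
      (A₁ H₁ : Matrix (Fin k) (Fin k) ℝ) (A₀ H₀ : Matrix (Fin l) (Fin l) ℝ),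
      IsUnit T.det ∧ IsUnit A₁.det ∧ IsNilpotent A₀ ∧
      T⁻¹ * A * T = (Matrix.fromBlocks A₁ 0 0 A₀).submatrix e e ∧
      Tᵀ * H * T = (Matrix.fromBlocks H₁ 0 0 H₀).submatrix e e := by
  classical
  -- Key algebraic identity: Aᵀ H = H A
  have hHA : Aᵀ * H = H * A := by
    have h1 : H * H⁻¹ = 1 := Matrix.mul_nonsing_inv H hdet
    calc Aᵀ * H = H * H⁻¹ * (Aᵀ * H) := by rw [h1, Matrix.one_mul]
    _ = H * (H⁻¹ * Aᵀ * H) := by noncomm_ring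
    _ = H * A := by rw [hA]
  have hHApow : ∀ m : ℕ, (A ^ m)ᵀ * H = H * A ^ m := by
    intro m
    induction m with
    | zero => simp
    | succ m ih =>
      calc (A ^ (m + 1))ᵀ * H = Aᵀ * ((A ^ m)ᵀ * H) := by
              rw [pow_succ, Matrix.transpose_mul, Matrix.mul_assoc]
        _ = Aᵀ * H * A ^ m := by rw [ih, Matrix.mul_assoc]
        _ = H * A * A ^ m := by rw [hHA]
        _ = H * A ^ (m + 1) := by rw [Matrix.mul_assoc, ← pow_succ']
  -- the endomorphism
  set f : Module.End ℝ (Fin n → ℝ) := Matrix.toLinAlgEquiv' A with hfdef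
  obtain ⟨N, hN⟩ := Filter.eventually_atTop.mp f.eventually_isCompl_ker_pow_range_pow
  set m := N + 1 with hmdef
  have hcompl : IsCompl (LinearMap.ker (f ^ m)) (LinearMap.range (f ^ m)) :=
    hN m (Nat.le_add_right _ _)
  set p := LinearMap.range (f ^ m) with hpdef
  set q := LinearMap.ker (f ^ m) with hqdef
  have hpq : IsCompl p q := hcompl.symm
  have hfm : f ^ m = Matrix.toLinAlgEquiv' (A ^ m) := (map_pow _ _ _).symm
  have hfp : ∀ x ∈ p, f x ∈ p := by
    rintro x ⟨y, rfl⟩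
    exact ⟨f y, by rw [← Module.End.mul_apply, ← pow_succ, pow_succ', Module.End.mul_apply]⟩
  have hfq : ∀ x ∈ q, f x ∈ q := by
    intro x hx
    simp only [hqdef, LinearMap.mem_ker] at hx ⊢
    rw [← Module.End.mul_apply, ← pow_succ, pow_succ', Module.End.mul_apply, hx, map_zero]
  set f1 : Module.End ℝ p := f.restrict hfp with hf1def
  set f0 : Module.End ℝ q := f.restrict hfq with hf0def
  -- f0 is nilpotent
  have hf0pow : f0 ^ m = 0 := by
    rw [hf0def, Module.End.pow_restrict]
    apply LinearMap.ext
    intro x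
    apply Subtype.ext
    rw [LinearMap.restrict_coe_apply, LinearMap.zero_apply, ZeroMemClass.coe_zero]
    exact LinearMap.mem_ker.mp x.2
  -- f1 is bijective
  have hinj : Function.Injective f1 := by
    rw [← LinearMap.ker_eq_bot]
    rw [Submodule.eq_bot_iff]
    rintro x hx
    have hx0 : f (x : Fin n → ℝ) = 0 := by
      have := congrArg (Subtype.val) (LinearMap.mem_ker.mp hx)
      simpa [hf1def, LinearMap.restrict_coe_apply] using this
    have hxq : (x : Fin n → ℝ) ∈ q := by
      simp only [hqdef, LinearMap.mem_ker, hmdef]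
      rw [pow_succ, Module.End.mul_apply, hx0, map_zero]
    have hxp : (x : Fin n → ℝ) ∈ p := x.2
    have : (x : Fin n → ℝ) ∈ p ⊓ q := ⟨hxp, hxq⟩
    rw [hpq.inf_eq_bot, Submodule.mem_bot] at this
    exact Subtype.ext this
  have hsurj : Function.Surjective f1 :=
    LinearMap.injective_iff_surjective.mp hinj
  have hdet1 : IsUnit (LinearMap.det f1) :=
    (LinearEquiv.ofBijective f1 ⟨hinj, hsurj⟩).isUnit_det'
  -- dimensions
  set k := Module.finrank ℝ p with hkdef
  set l := Module.finrank ℝ q with hldef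
  have hkl : k + l = n := by
    have h1 := Submodule.finrank_add_eq_of_isCompl hpq
    rwa [Module.finrank_fin_fun] at h1
  set e : Fin n ≃ (Fin k ⊕ Fin l) := (finCongr hkl.symm).trans finSumFinEquiv.symm with hedef
  -- bases
  set bp : Module.Basis (Fin k) ℝ p := Module.finBasis ℝ p with hbpdef
  set bq : Module.Basis (Fin l) ℝ q := Module.finBasis ℝ q with hbqdef
  set φ : (p × q) ≃ₗ[ℝ] (Fin n → ℝ) := Submodule.prodEquivOfIsCompl p q hpq with hφdef
  set bpq : Module.Basis (Fin k ⊕ Fin l) ℝ (Fin n → ℝ) := (bp.prod bq).map φ with hbpqdef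
  set b' : Module.Basis (Fin n) ℝ (Fin n → ℝ) := bpq.reindex e.symm with hb'def
  set s : Module.Basis (Fin n) ℝ (Fin n → ℝ) := Pi.basisFun ℝ (Fin n) with hsdef
  set T : Matrix (Fin n) (Fin n) ℝ := s.toMatrix b' with hTdef
  have hT1 : T * b'.toMatrix s = 1 := s.toMatrix_mul_toMatrix_flip b'
  have hT2 : b'.toMatrix s * T = 1 := b'.toMatrix_mul_toMatrix_flip s
  have hTunit : IsUnit T.det := Matrix.isUnit_det_of_right_inverse hT1
  have hTinv : T⁻¹ = b'.toMatrix s := Matrix.inv_eq_left_inv hT2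
  -- the blocks
  set A₁ : Matrix (Fin k) (Fin k) ℝ := LinearMap.toMatrix bp bp f1 with hA1def
  set A₀ : Matrix (Fin l) (Fin l) ℝ := LinearMap.toMatrix bq bq f0 with hA0def
  set H₁ : Matrix (Fin k) (Fin k) ℝ :=
    fun i j => (bpq (Sum.inl i)) ⬝ᵥ H.mulVec (bpq (Sum.inl j)) with hH1def
  set H₀ : Matrix (Fin l) (Fin l) ℝ :=
    fun i j => (bpq (Sum.inr i)) ⬝ᵥ H.mulVec (bpq (Sum.inr j)) with hH0def
  -- A₁ nonsingular
  have hA1unit : IsUnit A₁.det := by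
    rw [hA1def, LinearMap.det_toMatrix]
    exact hdet1
  -- A₀ nilpotent
  have hA0nil : IsNilpotent A₀ := by
    refine ⟨m, ?_⟩
    have : A₀ = LinearMap.toMatrixAlgEquiv bq f0 := rfl
    rw [this, ← map_pow, hf0pow, map_zero]
  -- conjugation identity
  have hconj : φ.symm.toLinearMap ∘ₗ (f : (Fin n → ℝ) →ₗ[ℝ] (Fin n → ℝ)) ∘ₗ φ.toLinearMap
      = f1.prodMap f0 := by
    apply LinearMap.ext
    rintro ⟨x, y⟩
    have h1 : φ (x, y) = (x : Fin n → ℝ) + (y : Fin n → ℝ) :=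
      Submodule.coe_prodEquivOfIsCompl' _ _ _ _
    have h2 : f ((x : Fin n → ℝ) + (y : Fin n → ℝ))
        = ((f1 x : p) : Fin n → ℝ) + ((f0 y : q) : Fin n → ℝ) := by
      rw [map_add, LinearMap.restrict_coe_apply, LinearMap.restrict_coe_apply]
    show φ.symm (f (φ (x, y))) = (f1 x, f0 y)
    rw [h1, h2, map_add, Submodule.prodEquivOfIsCompl_symm_apply_left,
      Submodule.prodEquivOfIsCompl_symm_apply_right]
    simp
  have hblockA : LinearMap.toMatrix bpq bpq f = Matrix.fromBlocks A₁ 0 0 A₀ := by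
    rw [hbpqdef, aux_toMatrix_map, hconj, LinearMap.toMatrix_prodMap]
  -- A block-diagonalisation
  have hAmat : A = LinearMap.toMatrix s s f := by
    rw [hsdef, LinearMap.toMatrix_eq_toMatrix']
    exact (LinearMap.toMatrix'_toLin' A).symm
  have hTAT : T⁻¹ * A * T = (Matrix.fromBlocks A₁ 0 0 A₀).submatrix e e := by
    rw [hTinv, hAmat, hTdef,
      basis_toMatrix_mul_linearMap_toMatrix_mul_basis_toMatrix, hb'def,
      aux_toMatrix_reindex, hblockA, Equiv.symm_symm]
  -- orthogonality
  have horth : ∀ x ∈ p, ∀ y ∈ q, (x : Fin n → ℝ) ⬝ᵥ H.mulVec y = 0 := by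
    rintro x ⟨z, rfl⟩ y hy
    have hy0 : (A ^ m).mulVec y = 0 := by
      have := LinearMap.mem_ker.mp hy
      rwa [hfm, Matrix.toLinAlgEquiv'_apply] at this
    have hx : (f ^ m) z = (A ^ m).mulVec z := by
      rw [hfm, Matrix.toLinAlgEquiv'_apply]
    rw [hx, dotProduct_mulVec, ← Matrix.vecMul_transpose, Matrix.vecMul_vecMul,
      hHApow m, ← dotProduct_mulVec, ← Matrix.mulVec_mulVec, hy0, Matrix.mulVec_zero,
      dotProduct_zero]
  have hsymm : ∀ x y : Fin n → ℝ, x ⬝ᵥ H.mulVec y = y ⬝ᵥ H.mulVec x := by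
    have hHsym : ∀ a c, H a c = H c a := fun a c => (congrFun (congrFun hH a) c).symm
    intro x y
    simp only [Matrix.mulVec, dotProduct, Finset.mul_sum]
    rw [Finset.sum_comm]
    exact Finset.sum_congr rfl fun c _ => Finset.sum_congr rfl fun a _ => by
      rw [hHsym a c]; ring
  -- basis vectors land in the right submodules
  have hbl : ∀ a : Fin k, (bpq (Sum.inl a) : Fin n → ℝ) = ((bp a : p) : Fin n → ℝ) := by
    intro a
    rw [hbpqdef, Module.Basis.map_apply, Module.Basis.prod_apply]
    simp [hφdef, Submodule.coe_prodEquivOfIsCompl']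
  have hbr : ∀ c : Fin l, (bpq (Sum.inr c) : Fin n → ℝ) = ((bq c : q) : Fin n → ℝ) := by
    intro c
    rw [hbpqdef, Module.Basis.map_apply, Module.Basis.prod_apply]
    simp [hφdef, Submodule.coe_prodEquivOfIsCompl']
  have hblp : ∀ a : Fin k, (bpq (Sum.inl a) : Fin n → ℝ) ∈ p := by
    intro a; rw [hbl]; exact (bp a).2
  have hbrq : ∀ c : Fin l, (bpq (Sum.inr c) : Fin n → ℝ) ∈ q := by
    intro c; rw [hbr]; exact (bq c).2
  -- entries of Tᵀ H T
  have hTcol : ∀ (a : Fin n) (j : Fin n), T a j = b' j a := by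
    intro a j
    rw [hTdef, Module.Basis.toMatrix_apply, hsdef, Pi.basisFun_repr]
  have hTHT : ∀ i j, (Tᵀ * H * T) i j = (b' i) ⬝ᵥ H.mulVec (b' j) := by
    intro i j
    simp only [Matrix.mul_apply, Matrix.transpose_apply, Matrix.mulVec, dotProduct,
      Finset.sum_mul, Finset.mul_sum, hTcol]
    rw [Finset.sum_comm]
    exact Finset.sum_congr rfl fun a _ => Finset.sum_congr rfl fun c _ => by ring
  have hb'e : ∀ i : Fin n, b' i = bpq (e i) := by
    intro i
    rw [hb'def, Module.Basis.reindex_apply, Equiv.symm_symm]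
  have hHblock : Tᵀ * H * T = (Matrix.fromBlocks H₁ 0 0 H₀).submatrix e e := by
    ext i j
    rw [Matrix.submatrix_apply, hTHT, hb'e, hb'e]
    rcases hei : e i with a | c <;> rcases hej : e j with a' | c'
    · rfl
    · exact horth _ (hblp a) _ (hbrq c')
    · rw [hsymm]
      exact horth _ (hblp a') _ (hbrq c)
    · rfl
  exact ⟨k, l, e, T, A₁, H₁, A₀, H₀, hTunit, hA1unit, hA0nil, hTAT, hHblock⟩
end
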